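/- Let β ≠ 0, ν, C₀, φ₀ be real constants. The function w(z) = C₀ + 6ν²/(25β) - (3ν²/(25β))·(1 + tanh(ν(z + φ₀)/(10β)))² satisfies the equation β·w'' - ν·w' + (1/2)w² - C₀·w + C₁ = 0 with C₁ = (1/2)C₀² - 18ν⁴/(625β²). -/

import Mathlib

lemma hasDerivAt_tanh (x : ℝ) :
    HasDerivAt Real.tanh (1 - Real.tanh x ^ 2) x := by
  have hc : Real.cosh x ≠ 0 := (Real.cosh_pos x).ne'
  have h := (Real.hasDerivAt_sinh x).div (Real.hasDerivAt_cosh x) hc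
  have heq : Real.tanh = fun y => Real.sinh y / Real.cosh y :=
    funext fun y => Real.tanh_eq_sinh_div_cosh y
  rw [heq]
  refine h.congr_deriv ?_
  beta_reduce
  have h1 : Real.cosh x ^ 2 - Real.sinh x ^ 2 = 1 := Real.cosh_sq_sub_sinh_sq x
  field_simp

theorem kdv_burgers_kink (β ν C₀ φ₀ : ℝ) (hβ : β ≠ 0) (w : ℝ → ℝ)
    (hw : ∀ z, w z = C₀ + 6 * ν ^ 2 / (25 * β)
      - (3 * ν ^ 2 / (25 * β)) * (1 + Real.tanh (ν * (z + φ₀) / (10 * β))) ^ 2) :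
    ∀ z, β * deriv (deriv w) z - ν * deriv w z + (1 / 2) * (w z) ^ 2 - C₀ * w z
      + ((1 / 2) * C₀ ^ 2 - 18 * ν ^ 4 / (625 * β ^ 2)) = 0 := by
  set c : ℝ := ν / (10 * β) with hc
  set B : ℝ := 3 * ν ^ 2 / (25 * β) with hB
  set T : ℝ → ℝ := fun z => Real.tanh (ν * (z + φ₀) / (10 * β)) with hT
  have hg : ∀ z : ℝ, HasDerivAt (fun z => ν * (z + φ₀) / (10 * β)) c z := by
    intro z
    have := (((hasDerivAt_id z).add_const φ₀).const_mul ν).div_const (10 * β)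
    simpa [hc, mul_comm] using this
  have ht : ∀ z : ℝ, HasDerivAt T ((1 - T z ^ 2) * c) z := by
    intro z
    exact (hasDerivAt_tanh _).comp z (hg z)
  -- first derivative
  have hw1 : ∀ z : ℝ, HasDerivAt w
      (-(B * (2 * (1 + T z) ^ 1 * ((1 - T z ^ 2) * c)))) z := by
    intro z
    have h1 : HasDerivAt (fun z => 1 + T z) ((1 - T z ^ 2) * c) z := (ht z).const_add 1
    have h2 := ((h1.pow 2).const_mul B).const_sub (C₀ + 6 * ν ^ 2 / (25 * β))
    have hwe : w = fun z => C₀ + 6 * ν ^ 2 / (25 * β) - B * (1 + T z) ^ 2 :=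
      funext fun z => hw z
    rw [hwe]
    exact h2.congr_deriv (by norm_num)
  have hdw : deriv w = fun z => -(B * (2 * (1 + T z) ^ 1 * ((1 - T z ^ 2) * c))) :=
    funext fun z => (hw1 z).deriv
  -- second derivative
  intro z
  have hf : HasDerivAt (fun z => 2 * (1 + T z) ^ 1) (2 * ((1 - T z ^ 2) * c)) z := by
    have h1 : HasDerivAt (fun z => 1 + T z) ((1 - T z ^ 2) * c) z := (ht z).const_add 1
    have := h1.const_mul 2
    simpa [pow_one] using this
  have hgd : HasDerivAt (fun z => (1 - T z ^ 2) * c)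
      (-(2 * T z ^ 1 * ((1 - T z ^ 2) * c)) * c) z := by
    exact (((ht z).pow 2).const_sub 1).mul_const c
  have hw2 : HasDerivAt (deriv w)
      (-(B * (2 * ((1 - T z ^ 2) * c) * ((1 - T z ^ 2) * c)
        + 2 * (1 + T z) ^ 1 * (-(2 * T z ^ 1 * ((1 - T z ^ 2) * c)) * c)))) z := by
    rw [hdw]
    exact ((hf.mul hgd).const_mul B).neg
  have e2 := hw2.deriv
  rw [e2, hdw, hw z]
  simp only [hB, hc, hT, pow_one]
  field_simp
  ring
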